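/- Let p be prime, N a positive integer, and let f : ℤ^N → ℤ be given by a finite binomial expansion f(x̄) = ∑_{n̄ ∈ T} C(x_1,n_1)⋯C(x_N,n_N) c(n̄) where T ⊆ ℕ^N is a finite set with |n̄| := n_1+⋯+n_N ≤ D for all n̄ ∈ T and c : T → ℤ. Then for any positive integers α_1 ≥ ⋯ ≥ α_N, the p-adic valuation of ∑_{x̄ ∈ ∏_i {0,…,p^{α_i}−1}} f(x̄) is at least V_p(ᾱ, D) := min{∑_{i=1}^N ν_p(α_i, n_i) : n̄ ∈ ℕ^N, |n̄| ≤ D}, where ν_p(α, n) = α − ord_p(n+1) if n ≤ p^α − 1 and ∞ otherwise. -/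

import Mathlib

open Finset

private lemma hockey (k : ℕ) : ∀ m : ℕ, ∑ x ∈ range m, x.choose k = m.choose (k+1) := by
  intro m
  induction m with
  | zero => simp
  | succ m ih => rw [Finset.sum_range_succ, ih, Nat.choose_succ_succ', Nat.add_comm]

theorem stmt_19 (p : ℕ) (hp : p.Prime) (N : ℕ) (hN : 0 < N) (D : ℕ)
    (T : Finset (Fin N → ℕ)) (hT : ∀ n ∈ T, ∑ i, n i ≤ D)
    (c : (Fin N → ℕ) → ℤ)
    (f : (Fin N → ℤ) → ℤ)
    (hf : ∀ x : Fin N → ℤ,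
      f x = ∑ n ∈ T, (∏ i, Ring.choose (x i) (n i)) * c n)
    (α : Fin N → ℕ) (hpos : ∀ i, 0 < α i)
    (hmono : ∀ i j : Fin N, i ≤ j → α j ≤ α i)
    (νp : ℕ → ℕ → ℕ∞)
    (hν : ∀ a n : ℕ, νp a n
      = if n ≤ p ^ a - 1 then ((a - padicValNat p (n + 1) : ℕ) : ℕ∞) else ⊤) :
    sInf {v : ℕ∞ | ∃ n : Fin N → ℕ, ∑ i, n i ≤ D ∧ v = ∑ i, νp (α i) (n i)}
      ≤ emultiplicity (p : ℤ)
          (∑ x ∈ Fintype.piFinset (fun i : Fin N => Finset.range (p ^ α i)),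
            f (fun i => (x i : ℤ))) := by
  classical
  have hpZ : Prime (p : ℤ) := Nat.prime_iff_prime_int.mp hp
  set S : Set ℕ∞ :=
    {v : ℕ∞ | ∃ n : Fin N → ℕ, ∑ i, n i ≤ D ∧ v = ∑ i, νp (α i) (n i)} with hS
  -- Step 1: rewrite the sum
  have key : (∑ x ∈ Fintype.piFinset (fun i : Fin N => Finset.range (p ^ α i)),
      f (fun i => (x i : ℤ)))
      = ∑ n ∈ T, (∏ i, ((p ^ α i).choose (n i + 1) : ℤ)) * c n := by
    simp only [hf]
    rw [Finset.sum_comm]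
    refine Finset.sum_congr rfl fun n _ => ?_
    rw [← Finset.sum_mul]
    congr 1
    calc ∑ x ∈ Fintype.piFinset (fun i : Fin N => Finset.range (p ^ α i)),
          ∏ i, Ring.choose ((x i : ℤ)) (n i)
        = ∏ i, ∑ x ∈ Finset.range (p ^ α i), Ring.choose ((x : ℤ)) (n i) :=
          (Finset.prod_univ_sum (fun i : Fin N => Finset.range (p ^ α i))
            (fun i x => Ring.choose ((x : ℤ)) (n i))).symm
      _ = ∏ i, ((p ^ α i).choose (n i + 1) : ℤ) := by
          refine Finset.prod_congr rfl fun i _ => ?_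
          have h1 : ∀ x ∈ Finset.range (p ^ α i),
              Ring.choose ((x : ℤ)) (n i) = ((x.choose (n i) : ℤ)) := fun x _ => by
            exact_mod_cast Ring.choose_natCast (R := ℤ) x (n i)
          rw [Finset.sum_congr rfl h1, ← Nat.cast_sum, hockey (n i) (p ^ α i)]
  rw [key]
  -- per-factor bound
  have hfac : ∀ a k : ℕ, νp a k ≤ emultiplicity (p : ℤ) (((p ^ a).choose (k + 1) : ℤ)) := by
    intro a k
    rw [Int.natCast_emultiplicity, hν]
    have hpa : 0 < p ^ a := Nat.pow_pos (n := a) hp.pos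
    split_ifs with h
    · have h1 : k + 1 ≤ p ^ a := Nat.lt_of_le_of_lt h (Nat.sub_lt hpa one_pos)
      rw [hp.emultiplicity_choose_prime_pow h1 (Nat.succ_ne_zero k),
        padicValNat_def' hp.ne_one (Nat.succ_ne_zero k)]
    · have h0 : (p ^ a).choose (k + 1) = 0 :=
        Nat.choose_eq_zero_of_lt (Nat.lt_succ_of_le (Nat.le_of_pred_lt (Nat.lt_of_not_le h)))
      rw [h0, emultiplicity_zero]
  -- per term bound
  have hterm : ∀ n ∈ T, sInf S ≤
      emultiplicity (p : ℤ) ((∏ i, ((p ^ α i).choose (n i + 1) : ℤ)) * c n) := by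
    intro n hn
    have hmem : (∑ i, νp (α i) (n i)) ∈ S := ⟨n, hT n hn, rfl⟩
    refine le_trans (sInf_le hmem) ?_
    rw [emultiplicity_mul hpZ, Finset.emultiplicity_prod hpZ]
    exact le_trans (Finset.sum_le_sum fun i _ => hfac (α i) (n i)) le_self_add
  -- conclude
  rcases eq_top_or_lt_top (sInf S) with hk | hk
  · -- top case : all terms are zero
    have hzero : ∀ n ∈ T, (∏ i, ((p ^ α i).choose (n i + 1) : ℤ)) * c n = 0 := by
      intro n hn
      have := hterm n hn
      rw [hk, top_le_iff, emultiplicity_eq_top] at this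
      by_contra h0
      exact this (Int.finiteMultiplicity_iff.mpr ⟨by simpa using hp.ne_one, h0⟩)
    rw [Finset.sum_eq_zero hzero, emultiplicity_zero]
    exact le_top
  · -- finite case : use divisibility
    obtain ⟨m, hk⟩ := WithTop.ne_top_iff_exists.mp hk.ne
    rw [← hk]
    have hdvd : (p : ℤ) ^ m ∣ ∑ n ∈ T, (∏ i, ((p ^ α i).choose (n i + 1) : ℤ)) * c n := by
      refine Finset.dvd_sum fun n hn => ?_
      refine pow_dvd_of_le_emultiplicity ?_
      exact le_trans hk.le (hterm n hn)
    exact le_emultiplicity_of_pow_dvd hdvd
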